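/- For all subspaces p, q, r, s of ℂ² (i.e., of EuclideanSpace ℂ (Fin 2)), β(p,q,r,s) = ⊥, where β(p,q,r,s) = α(α(p,q,r), α(p,q,r)ᗮ ⊓ pᗮ, s). -/

import Mathlib

open Module

noncomputable def distribTest {E : Type*} [NormedAddCommGroup E] [InnerProductSpace ℂ E]
    (p q r : Submodule ℂ E) : Submodule ℂ E :=
  ((p ⊔ (q ⊓ r)) ⊔ ((p ⊔ q) ⊓ (p ⊔ r))) ⊓ ((p ⊔ (q ⊓ r))ᗮ ⊔ ((p ⊔ q) ⊓ (p ⊔ r))ᗮ)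

lemma dt_bot_mid {E : Type*} [NormedAddCommGroup E] [InnerProductSpace ℂ E]
    (x s : Submodule ℂ E) : distribTest x ⊥ s = ⊥ := by
  simp [distribTest, inf_of_le_left (le_sup_left : x ≤ x ⊔ s),
    Submodule.inf_orthogonal_eq_bot]

lemma dt_bot_left {E : Type*} [NormedAddCommGroup E] [InnerProductSpace ℂ E]
    (y s : Submodule ℂ E) : distribTest ⊥ y s = ⊥ := by
  simp [distribTest, Submodule.inf_orthogonal_eq_bot]

lemma dt_key (p q r : Submodule ℂ (EuclideanSpace ℂ (Fin 2))) :
    distribTest p q r = ⊥ ∨ (distribTest p q r)ᗮ ⊓ pᗮ = ⊥ := by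
  by_cases hp2 : p = ⊤
  · left; simp [distribTest, hp2]
  by_cases hp0 : p = ⊥
  · left; simp [distribTest, hp0, Submodule.inf_orthogonal_eq_bot]
  have hE : finrank ℂ (EuclideanSpace ℂ (Fin 2)) = 2 := finrank_euclideanSpace_fin
  have hp1 : finrank ℂ p = 1 := by
    have h1 : finrank ℂ p ≤ 2 := by have := p.finrank_le; rwa [hE] at this
    have h2 : finrank ℂ p ≠ 0 := by
      simpa [Submodule.finrank_eq_zero] using hp0
    have h3 : finrank ℂ p ≠ 2 := fun h => hp2 (Submodule.eq_top_of_finrank_eq (by rw [h, hE]))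
    omega
  by_cases ha : p ⊔ (q ⊓ r) = ⊤
  · left
    have hab : p ⊔ (q ⊓ r) ≤ (p ⊔ q) ⊓ (p ⊔ r) :=
      le_inf (sup_le_sup_left inf_le_left p) (sup_le_sup_left inf_le_right p)
    have hb : (p ⊔ q) ⊓ (p ⊔ r) = ⊤ := top_le_iff.mp (ha ▸ hab)
    simp [distribTest, ha, hb]
  · have ha' : p ⊔ (q ⊓ r) = p := by
      refine (Submodule.eq_of_le_of_finrank_le le_sup_left ?_).symm
      have : finrank ℂ (p ⊔ (q ⊓ r) : Submodule ℂ (EuclideanSpace ℂ (Fin 2))) < 2 := by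
        have := Submodule.finrank_lt ha
        rwa [hE] at this
      omega
    by_cases hb : (p ⊔ q) ⊓ (p ⊔ r) = ⊤
    · right
      have ht : distribTest p q r = pᗮ := by
        rw [distribTest, ha', hb]; simp
      rw [ht, Submodule.orthogonal_orthogonal]
      exact Submodule.inf_orthogonal_eq_bot p
    · left
      have hb' : (p ⊔ q) ⊓ (p ⊔ r) = p := by
        refine (Submodule.eq_of_le_of_finrank_le (le_inf le_sup_left le_sup_left) ?_).symm
        have : finrank ℂ ((p ⊔ q) ⊓ (p ⊔ r) : Submodule ℂ (EuclideanSpace ℂ (Fin 2))) < 2 := by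
          have := Submodule.finrank_lt hb
          rwa [hE] at this
        omega
      rw [distribTest, ha', hb']
      simp [Submodule.inf_orthogonal_eq_bot]

theorem beta_eq_bot_on_C2
    (p q r s : Submodule ℂ (EuclideanSpace ℂ (Fin 2))) :
    distribTest (distribTest p q r) ((distribTest p q r)ᗮ ⊓ pᗮ) s = ⊥ := by
  rcases dt_key p q r with h | h
  · rw [h]; exact dt_bot_left _ _
  · rw [h]; exact dt_bot_mid _ _
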